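/- Let f, g be arithmetic functions and suppose coefficients s_{n,k} satisfy: for every arithmetic function a and every n, C(q)·∑_{k≥1} a(k) q^k/(1−q^k) has n-th coefficient ∑_{k=1}^n s_{n,k} a(k). Then with s̃_{n,k}(g) := ∑_{j=1}^n s_{n,kj} g(j), the n-th coefficient of C(q)·∑_{k≥1} (f∗g)(k) q^k/(1−q^k) equals ∑_{k=1}^n s̃_{n,k}(g) f(k). -/

import Mathlib

open PowerSeries Finset

/-- Dirichlet convolution of two arithmetic functions. -/
noncomputable def dconv (f g : ℕ → ℂ) (n : ℕ) : ℂ := ∑ d ∈ n.divisors, f d * g (n / d)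

/-- If `s n k` are factorization coefficients for `C(q)` (so that for every
arithmetic function `a` the n-th coefficient of `C(q) ∑_{k≥1} a(k) q^k/(1−q^k)` is
`∑_{k=1}^n s n k * a k`), then with `s̃_{n,k}(g) = ∑_{j=1}^n s n (k*j) g(j)` the n-th
coefficient of `C(q) ∑_{k≥1} (f∗g)(k) q^k/(1−q^k)` equals `∑_{k=1}^n s̃_{n,k}(g) f(k)`. -/
theorem lambert_factorization_dirichlet_convolution
    (C : PowerSeries ℂ) (hC : constantCoeff C ≠ 0)
    (s : ℕ → ℕ → ℂ)
    (hs : ∀ n k, s n k =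
      (PowerSeries.coeff n) (C * ((X : PowerSeries ℂ) ^ k * (1 - (X : PowerSeries ℂ) ^ k)⁻¹)))
    (hfact : ∀ (a : ℕ → ℂ) (n : ℕ), 1 ≤ n →
      (PowerSeries.coeff n)
          (C * ∑ k ∈ Finset.Icc 1 n,
            a k • ((X : PowerSeries ℂ) ^ k * (1 - (X : PowerSeries ℂ) ^ k)⁻¹)) =
        ∑ k ∈ Finset.Icc 1 n, s n k * a k)
    (f g : ℕ → ℂ) (n : ℕ) (hn : 1 ≤ n) :
    (PowerSeries.coeff n)
        (C * ∑ k ∈ Finset.Icc 1 n,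
          dconv f g k • ((X : PowerSeries ℂ) ^ k * (1 - (X : PowerSeries ℂ) ^ k)⁻¹)) =
      ∑ k ∈ Finset.Icc 1 n, (∑ j ∈ Finset.Icc 1 n, s n (k * j) * g j) * f k := by

  -- s n m vanishes for m > n
  have hs0 : ∀ m : ℕ, n < m → s n m = 0 := by
    intro m hm
    rw [hs]
    have hrw : C * ((X : PowerSeries ℂ) ^ m * (1 - (X : PowerSeries ℂ) ^ m)⁻¹) =
        (C * (1 - (X : PowerSeries ℂ) ^ m)⁻¹) * (X : PowerSeries ℂ) ^ m := by ring
    rw [hrw, PowerSeries.coeff_mul_X_pow', if_neg (by omega)]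
  rw [hfact (dconv f g) n hn]
  -- unfold dconv as a sum over divisorsAntidiagonal
  have hL : ∑ k ∈ Finset.Icc 1 n, s n k * dconv f g k =
      ∑ k ∈ Finset.Icc 1 n, ∑ p ∈ k.divisorsAntidiagonal, s n (p.1 * p.2) * (f p.1 * g p.2) := by
    refine Finset.sum_congr rfl fun k hk => ?_
    rw [dconv, Finset.mul_sum]
    refine Eq.trans ?_ (Nat.sum_divisorsAntidiagonal (fun d e => s n (d * e) * (f d * g e))).symm
    refine Finset.sum_congr rfl fun d hd => ?_
    rw [Nat.mem_divisors] at hd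
    rw [Nat.mul_div_cancel' hd.1]
  rw [hL]
  -- the filtered pair set
  set T : Finset (ℕ × ℕ) := (Finset.Icc 1 n ×ˢ Finset.Icc 1 n).filter (fun p => p.1 * p.2 ≤ n)
    with hT
  have hLT : ∑ k ∈ Finset.Icc 1 n, ∑ p ∈ k.divisorsAntidiagonal, s n (p.1 * p.2) * (f p.1 * g p.2)
      = ∑ p ∈ T, s n (p.1 * p.2) * (f p.1 * g p.2) := by
    rw [Finset.sum_sigma']
    refine Finset.sum_nbij' (fun x => x.2) (fun p => ⟨p.1 * p.2, p⟩) ?_ ?_ ?_ ?_ ?_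
    · rintro ⟨k, d, e⟩ hx
      simp only [Finset.mem_sigma, Finset.mem_Icc, Nat.mem_divisorsAntidiagonal] at hx
      obtain ⟨⟨hk1, hkn⟩, hde, hk0⟩ := hx
      have hd1 : 1 ≤ d := Nat.pos_of_ne_zero (by rintro rfl; simp at hde; omega)
      have he1 : 1 ≤ e := Nat.pos_of_ne_zero (by rintro rfl; simp at hde; omega)
      simp only [hT, Finset.mem_filter, Finset.mem_product, Finset.mem_Icc]
      refine ⟨⟨⟨hd1, ?_⟩, ⟨he1, ?_⟩⟩, by omega⟩
      · calc d ≤ d * e := Nat.le_mul_of_pos_right d he1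
          _ ≤ n := by omega
      · calc e ≤ d * e := Nat.le_mul_of_pos_left e hd1
          _ ≤ n := by omega
    · rintro ⟨d, e⟩ hp
      simp only [hT, Finset.mem_filter, Finset.mem_product, Finset.mem_Icc] at hp
      obtain ⟨⟨⟨hd1, _⟩, ⟨he1, _⟩⟩, hden⟩ := hp
      simp only [Finset.mem_sigma, Finset.mem_Icc, Nat.mem_divisorsAntidiagonal]
      exact ⟨⟨Nat.one_le_iff_ne_zero.mpr (by positivity), hden⟩, trivial, by positivity⟩
    · rintro ⟨k, d, e⟩ hx
      simp only [Finset.mem_sigma, Nat.mem_divisorsAntidiagonal] at hx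
      simp [hx.2.1]
    · rintro ⟨d, e⟩ _; rfl
    · rintro ⟨k, d, e⟩ _; rfl
  rw [hLT]
  -- RHS: expand the product of sums and restrict to T
  have hR : ∑ k ∈ Finset.Icc 1 n, (∑ j ∈ Finset.Icc 1 n, s n (k * j) * g j) * f k
      = ∑ p ∈ Finset.Icc 1 n ×ˢ Finset.Icc 1 n, s n (p.1 * p.2) * (f p.1 * g p.2) := by
    rw [Finset.sum_product]
    refine Finset.sum_congr rfl fun k _ => ?_
    rw [Finset.sum_mul]
    refine Finset.sum_congr rfl fun j _ => by ring
  rw [hR, ← Finset.sum_filter_add_sum_filter_not (Finset.Icc 1 n ×ˢ Finset.Icc 1 n)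
    (fun p => p.1 * p.2 ≤ n)]
  have hz : ∑ p ∈ (Finset.Icc 1 n ×ˢ Finset.Icc 1 n).filter (fun p => ¬ p.1 * p.2 ≤ n),
      s n (p.1 * p.2) * (f p.1 * g p.2) = 0 := by
    refine Finset.sum_eq_zero fun p hp => ?_
    simp only [Finset.mem_filter] at hp
    rw [hs0 _ (by omega), zero_mul]
  rw [hz, add_zero]
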